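/- Let K ⊂ ℝˡ be compact with nonempty interior, m an interior point of K, and α : K → ℝ continuous with α(m) ≤ α(p) for all p, satisfying α(m) + C₁‖p−m‖² ≤ α(p) ≤ α(m) + C₂‖p−m‖² for constants C₁, C₂ > 0. Then for the normalized densities ρ_s(p) = e^{−s α(p)} / ∫_K e^{−s α(q)} dq, for every open neighborhood B of m in K, the mass outside B tends to zero: lim_{s→∞} ∫_{K∖B} ρ_s(p) dp = 0. -/

import Mathlib

open MeasureTheory Filter

/-- Concentration: for `α` continuous on a compact `K ⊂ ℝˡ` with minimum at the
interior point `m` and quadratic bounds `α(m) + C₁‖p-m‖² ≤ α(p) ≤ α(m) + C₂‖p-m‖²`,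
the normalized densities `ρ_s = e^{-sα}/∫_K e^{-sα}` have mass outside any relatively
open neighborhood `B` of `m` tending to `0` as `s → ∞`. -/
theorem stmt5 (l : ℕ) (K : Set (EuclideanSpace ℝ (Fin l))) (hK : IsCompact K)
    (m : EuclideanSpace ℝ (Fin l)) (hm : m ∈ interior K)
    (α : EuclideanSpace ℝ (Fin l) → ℝ) (hα : ContinuousOn α K)
    (C₁ C₂ : ℝ) (hC₁ : 0 < C₁) (hC₂ : 0 < C₂)
    (hmin : ∀ p ∈ K, α m ≤ α p)
    (hbound : ∀ p ∈ K, α m + C₁ * ‖p - m‖ ^ 2 ≤ α p ∧ α p ≤ α m + C₂ * ‖p - m‖ ^ 2) :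
    ∀ B : Set (EuclideanSpace ℝ (Fin l)), m ∈ B → (∃ O, IsOpen O ∧ B = K ∩ O) →
      Tendsto
        (fun s : ℝ => (∫ p in K \ B, Real.exp (-s * α p)) / ∫ p in K, Real.exp (-s * α p))
        atTop (nhds 0) := by
  rintro B hmB ⟨O, hO, rfl⟩
  obtain ⟨ε₁, hε₁, hball₁⟩ := Metric.isOpen_iff.mp isOpen_interior m hm
  obtain ⟨ε₂, hε₂, hball₂⟩ := Metric.isOpen_iff.mp hO m hmB.2
  set ε := min ε₁ ε₂ with hεdef
  have hεpos : 0 < ε := lt_min hε₁ hε₂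
  have hsq : (0:ℝ) < C₁ * ε ^ 2 / (2 * C₂) := by positivity
  set δ := min ε (Real.sqrt (C₁ * ε ^ 2 / (2 * C₂))) with hδdef
  have hδpos : 0 < δ := lt_min hεpos (Real.sqrt_pos.mpr hsq)
  have hδε : δ ≤ ε := min_le_left _ _
  have hC2δ : C₂ * δ ^ 2 < C₁ * ε ^ 2 := by
    have h1 : δ ≤ Real.sqrt (C₁ * ε ^ 2 / (2 * C₂)) := min_le_right _ _
    have h2 : Real.sqrt (C₁ * ε ^ 2 / (2 * C₂)) ^ 2 = C₁ * ε ^ 2 / (2 * C₂) :=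
      Real.sq_sqrt hsq.le
    have h3 : δ ^ 2 ≤ C₁ * ε ^ 2 / (2 * C₂) := by
      nlinarith [hδpos.le, Real.sqrt_nonneg (C₁ * ε ^ 2 / (2 * C₂))]
    have h5 : C₂ * δ ^ 2 ≤ C₂ * (C₁ * ε ^ 2 / (2 * C₂)) := by nlinarith
    have h6 : C₂ * (C₁ * ε ^ 2 / (2 * C₂)) = C₁ * ε ^ 2 / 2 := by field_simp
    nlinarith [mul_pos hC₁ (pow_pos hεpos 2)]
  have hballK : Metric.ball m δ ⊆ K := fun p hp =>
    interior_subset (hball₁ (Metric.mem_ball.mpr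
      (lt_of_lt_of_le (Metric.mem_ball.mp hp) (hδε.trans (min_le_left _ _)))))
  have hKmeas : MeasurableSet K := hK.measurableSet
  have hBmeas : MeasurableSet (K ∩ O) := hKmeas.inter hO.measurableSet
  have hint : ∀ s : ℝ, IntegrableOn (fun p => Real.exp (-s * α p)) K := fun s =>
    (Real.continuous_exp.comp_continuousOn (continuousOn_const.mul hα)).integrableOn_compact hK
  set μK := (volume K).toReal with hμK
  set μb := (volume (Metric.ball m δ)).toReal with hμb
  have hμbpos : 0 < μb :=
    ENNReal.toReal_pos (Metric.measure_ball_pos volume m hδpos).ne' measure_ball_lt_top.ne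
  -- numerator bound
  have num_le : ∀ s : ℝ, 0 ≤ s →
      (∫ p in K \ (K ∩ O), Real.exp (-s * α p)) ≤ μK * Real.exp (-s * (α m + C₁ * ε ^ 2)) := by
    intro s hs
    have hsub : K \ (K ∩ O) ⊆ K := Set.diff_subset
    have h1 : (∫ p in K \ (K ∩ O), Real.exp (-s * α p))
        ≤ ∫ _ in K \ (K ∩ O), Real.exp (-s * (α m + C₁ * ε ^ 2)) := by
      apply setIntegral_mono_on ((hint s).mono_set hsub)
        (integrableOn_const ((measure_mono hsub).trans_lt hK.measure_lt_top).ne)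
        (hKmeas.diff hBmeas)
      intro p hp
      have hpK : p ∈ K := hp.1
      have hpO : p ∉ O := fun h => hp.2 ⟨hpK, h⟩
      have hdist : ε ≤ ‖p - m‖ := by
        by_contra h
        push_neg at h
        exact hpO (hball₂ (Metric.mem_ball.mpr
          (lt_of_lt_of_le (by rw [dist_eq_norm]; exact lt_of_lt_of_le h (min_le_right _ _))
            le_rfl)))
      have hαp : α m + C₁ * ε ^ 2 ≤ α p := by
        have hb := (hbound p hpK).1
        have hsq2 : ε * ε ≤ ‖p - m‖ * ‖p - m‖ :=
          mul_le_mul hdist hdist hεpos.le (norm_nonneg _)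
        nlinarith [norm_nonneg (p - m)]
      exact Real.exp_le_exp.mpr (by nlinarith)
    have h2 : (∫ _ in K \ (K ∩ O), Real.exp (-s * (α m + C₁ * ε ^ 2)))
        ≤ μK * Real.exp (-s * (α m + C₁ * ε ^ 2)) := by
      rw [setIntegral_const]
      exact mul_le_mul_of_nonneg_right
        (ENNReal.toReal_mono hK.measure_lt_top.ne (measure_mono hsub)) (Real.exp_pos _).le
    exact h1.trans h2
  -- denominator bound
  have den_ge : ∀ s : ℝ, 0 ≤ s →
      μb * Real.exp (-s * (α m + C₂ * δ ^ 2)) ≤ ∫ p in K, Real.exp (-s * α p) := by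
    intro s hs
    have h1 : μb * Real.exp (-s * (α m + C₂ * δ ^ 2))
        ≤ ∫ p in Metric.ball m δ, Real.exp (-s * α p) := by
      have hmono := setIntegral_mono_on
        (f := fun _ => Real.exp (-s * (α m + C₂ * δ ^ 2)))
        (g := fun p => Real.exp (-s * α p))
        (integrableOn_const measure_ball_lt_top.ne)
        ((hint s).mono_set hballK) Metric.isOpen_ball.measurableSet
        (fun p hp => by
          have hpK : p ∈ K := hballK hp
          have hd : ‖p - m‖ < δ := by rw [← dist_eq_norm]; exact Metric.mem_ball.mp hp
          have hb := (hbound p hpK).2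
          have hsq2 : ‖p - m‖ * ‖p - m‖ ≤ δ * δ :=
            mul_le_mul hd.le hd.le (norm_nonneg _) hδpos.le
          have hαp : α p ≤ α m + C₂ * δ ^ 2 := by nlinarith
          exact Real.exp_le_exp.mpr (by nlinarith))
      rwa [setIntegral_const, smul_eq_mul] at hmono
    have h2 : (∫ p in Metric.ball m δ, Real.exp (-s * α p)) ≤ ∫ p in K, Real.exp (-s * α p) :=
      setIntegral_mono_set (hint s)
        (Filter.Eventually.of_forall fun p => (Real.exp_pos _).le)
        (HasSubset.Subset.eventuallyLE hballK)
    exact h1.trans h2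
  -- squeeze
  have hc : 0 < C₁ * ε ^ 2 - C₂ * δ ^ 2 := by linarith
  have hg : Tendsto (fun s : ℝ => μK / μb * Real.exp (-(s * (C₁ * ε ^ 2 - C₂ * δ ^ 2))))
      atTop (nhds 0) := by
    have h1 : Tendsto (fun s : ℝ => s * (C₁ * ε ^ 2 - C₂ * δ ^ 2)) atTop atTop :=
      tendsto_id.atTop_mul_const hc
    have h2 := Real.tendsto_exp_neg_atTop_nhds_zero.comp h1
    simpa using tendsto_const_nhds.mul h2
  refine squeeze_zero' ?_ ?_ hg
  · filter_upwards [eventually_ge_atTop (0:ℝ)] with s hs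
    exact div_nonneg (setIntegral_nonneg (hKmeas.diff hBmeas) fun p _ => (Real.exp_pos _).le)
      (setIntegral_nonneg hKmeas fun p _ => (Real.exp_pos _).le)
  · filter_upwards [eventually_ge_atTop (0:ℝ)] with s hs
    have hden : 0 < μb * Real.exp (-s * (α m + C₂ * δ ^ 2)) :=
      mul_pos hμbpos (Real.exp_pos _)
    have hdd := div_le_div₀ (by positivity) (num_le s hs) hden (den_ge s hs)
    have heq : μK * Real.exp (-s * (α m + C₁ * ε ^ 2)) /
        (μb * Real.exp (-s * (α m + C₂ * δ ^ 2))) =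
        μK / μb * Real.exp (-(s * (C₁ * ε ^ 2 - C₂ * δ ^ 2))) := by
      have harg : (-s * (α m + C₁ * ε ^ 2)) - (-s * (α m + C₂ * δ ^ 2)) =
          -(s * (C₁ * ε ^ 2 - C₂ * δ ^ 2)) := by ring
      rw [mul_div_mul_comm, ← Real.exp_sub, harg]
    exact hdd.trans_eq heq
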